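/- The intersection of two thick subsets of a group is thick. -/

import Mathlib

/-- `s` is homogeneous of color `b` for the coloring `c`. -/
def Homog (c : ℕ → ℕ → Bool) (b : Bool) (s : Finset ℕ) : Prop :=
  ∀ i ∈ s, ∀ j ∈ s, i < j → c i j = b

/-- Relativize a homogeneous-set statement to a finset `A`. -/
lemma relativize (N p q : ℕ)
    (hN : ∀ c : ℕ → ℕ → Bool, ∃ s : Finset ℕ, s ⊆ Finset.range N ∧
      ((p ≤ s.card ∧ Homog c true s) ∨ (q ≤ s.card ∧ Homog c false s)))
    (c : ℕ → ℕ → Bool) (A : Finset ℕ) (hA : N ≤ A.card) :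
    ∃ t : Finset ℕ, t ⊆ A ∧
      ((p ≤ t.card ∧ Homog c true t) ∨ (q ≤ t.card ∧ Homog c false t)) := by
  set e := A.orderEmbOfFin (rfl : A.card = A.card) with he
  set f : ℕ → ℕ := fun i => if h : i < A.card then e ⟨i, h⟩ else 0 with hf
  obtain ⟨s, hsub, hcase⟩ := hN (fun i j => c (f i) (f j))
  have hlt : ∀ i ∈ s, i < A.card := fun i hi =>
    lt_of_lt_of_le (Finset.mem_range.mp (hsub hi)) hA
  have hfs : ∀ i (hi : i ∈ s), f i = e ⟨i, hlt i hi⟩ := by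
    intro i hi; simp [hf, hlt i hi]
  have hmono : ∀ i ∈ s, ∀ j ∈ s, i < j → f i < f j := by
    intro i hi j hj hij
    rw [hfs i hi, hfs j hj]
    exact e.strictMono (by simpa using hij)
  have hinj : Set.InjOn f s := by
    intro i hi j hj hij
    rcases lt_trichotomy i j with h | h | h
    · exact absurd hij (hmono i hi j hj h).ne
    · exact h
    · exact absurd hij.symm (hmono j hj i hi h).ne
  refine ⟨s.image f, ?_, ?_⟩
  · intro x hx
    obtain ⟨i, hi, rfl⟩ := Finset.mem_image.mp hx
    rw [hfs i hi]
    exact A.orderEmbOfFin_mem rfl _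
  · have hcard : (s.image f).card = s.card := Finset.card_image_of_injOn hinj
    have hhom : ∀ b : Bool, Homog (fun i j => c (f i) (f j)) b s →
        Homog c b (s.image f) := by
      intro b hb x hx y hy hxy
      obtain ⟨i, hi, rfl⟩ := Finset.mem_image.mp hx
      obtain ⟨j, hj, rfl⟩ := Finset.mem_image.mp hy
      have hij : i < j := by
        rcases lt_trichotomy i j with h | h | h
        · exact h
        · subst h; exact absurd hxy (lt_irrefl _)
        · exact absurd hxy (not_lt_of_gt (hmono j hj i hi h))
      exact hb i hi j hj hij
    rcases hcase with ⟨hc, hhb⟩ | ⟨hc, hhb⟩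
    · exact Or.inl ⟨hcard ▸ hc, hhom true hhb⟩
    · exact Or.inr ⟨hcard ▸ hc, hhom false hhb⟩

/-- Finite Ramsey theorem for two colors. -/
lemma ramsey : ∀ p q : ℕ, ∃ N : ℕ, ∀ c : ℕ → ℕ → Bool,
    ∃ s : Finset ℕ, s ⊆ Finset.range N ∧
      ((p ≤ s.card ∧ Homog c true s) ∨ (q ≤ s.card ∧ Homog c false s)) := by
  intro p
  induction p with
  | zero =>
    intro q
    exact ⟨0, fun c => ⟨∅, Finset.Subset.refl _,
      Or.inl ⟨le_refl 0, fun i hi => absurd hi (Finset.notMem_empty i)⟩⟩⟩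
  | succ p ihp =>
    intro q
    induction q with
    | zero =>
      exact ⟨0, fun c => ⟨∅, Finset.Subset.refl _,
        Or.inr ⟨le_refl 0, fun i hi => absurd hi (Finset.notMem_empty i)⟩⟩⟩
    | succ q ihq =>
      obtain ⟨N₁, h₁⟩ := ihp (q + 1)
      obtain ⟨N₂, h₂⟩ := ihq
      refine ⟨N₁ + N₂ + 1, fun c => ?_⟩
      classical
      set A := (Finset.Ico 1 (N₁ + N₂ + 1)).filter (fun x => c 0 x = true) with hA
      set B := (Finset.Ico 1 (N₁ + N₂ + 1)).filter (fun x => ¬ c 0 x = true) with hB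
      have hAB : A.card + B.card = N₁ + N₂ := by
        rw [hA, hB, Finset.card_filter_add_card_filter_not]
        simp
      have hrange : ∀ x ∈ Finset.Ico 1 (N₁ + N₂ + 1), x ∈ Finset.range (N₁ + N₂ + 1) := by
        intro x hx
        rw [Finset.mem_range]
        exact (Finset.mem_Ico.mp hx).2
      have h0A : ∀ x ∈ A, 0 < x ∧ c 0 x = true := by
        intro x hx
        rw [hA, Finset.mem_filter] at hx
        exact ⟨(Finset.mem_Ico.mp hx.1).1, hx.2⟩
      have h0B : ∀ x ∈ B, 0 < x ∧ c 0 x = false := by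
        intro x hx
        rw [hB, Finset.mem_filter] at hx
        exact ⟨(Finset.mem_Ico.mp hx.1).1, by simpa using hx.2⟩
      rcases le_or_gt N₁ A.card with hle | hlt
      · -- A big: use h₁ inside A
        obtain ⟨t, htA, hcase⟩ := relativize N₁ p (q+1) h₁ c A hle
        have htsub : t ⊆ Finset.range (N₁ + N₂ + 1) := fun x hx =>
          hrange x (Finset.mem_filter.mp (htA hx)).1
        rcases hcase with ⟨hc, hh⟩ | ⟨hc, hh⟩
        · -- insert 0, grow true side
          have h0 : 0 ∉ t := fun h => (h0A 0 (htA h)).1.false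
          refine ⟨insert 0 t, ?_, Or.inl ⟨?_, ?_⟩⟩
          · intro x hx
            rcases Finset.mem_insert.mp hx with rfl | hx
            · simp
            · exact htsub hx
          · rw [Finset.card_insert_of_notMem h0]; omega
          · intro i hi j hj hij
            rcases Finset.mem_insert.mp hi with rfl | hi
            · rcases Finset.mem_insert.mp hj with rfl | hj
              · exact absurd hij (lt_irrefl _)
              · exact (h0A j (htA hj)).2
            · rcases Finset.mem_insert.mp hj with rfl | hj
              · exact absurd hij (Nat.not_lt_zero i)
              · exact hh i hi j hj hij
        · exact ⟨t, htsub, Or.inr ⟨hc, hh⟩⟩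
      · have hle₂ : N₂ ≤ B.card := by omega
        obtain ⟨t, htB, hcase⟩ := relativize N₂ (p+1) q h₂ c B hle₂
        have htsub : t ⊆ Finset.range (N₁ + N₂ + 1) := fun x hx =>
          hrange x (Finset.mem_filter.mp (htB hx)).1
        rcases hcase with ⟨hc, hh⟩ | ⟨hc, hh⟩
        · exact ⟨t, htsub, Or.inl ⟨hc, hh⟩⟩
        · have h0 : 0 ∉ t := fun h => (h0B 0 (htB h)).1.false
          refine ⟨insert 0 t, ?_, Or.inr ⟨?_, ?_⟩⟩
          · intro x hx
            rcases Finset.mem_insert.mp hx with rfl | hx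
            · simp
            · exact htsub hx
          · rw [Finset.card_insert_of_notMem h0]; omega
          · intro i hi j hj hij
            rcases Finset.mem_insert.mp hi with rfl | hi
            · rcases Finset.mem_insert.mp hj with rfl | hj
              · exact absurd hij (lt_irrefl _)
              · exact (h0B j (htB hj)).2
            · rcases Finset.mem_insert.mp hj with rfl | hj
              · exact absurd hij (Nat.not_lt_zero i)
              · exact hh i hi j hj hij

/-- A subset `D` of a group `G` is thick if it is symmetric and there is `n > 0` such
that among any `n` elements `g₀, …, g_{n-1}` of `G` some quotient `gᵢ⁻¹ gⱼ` (`i < j`)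
lies in `D`. -/
def IsThick {G : Type*} [Group G] (D : Set G) : Prop :=
  (∀ d ∈ D, d⁻¹ ∈ D) ∧
    ∃ n : ℕ, 0 < n ∧ ∀ g : Fin n → G, ∃ i j : Fin n, i < j ∧ (g i)⁻¹ * g j ∈ D

/-- Extract a pair with quotient in `D` from a big enough finset of indices. -/
lemma extract {G : Type*} [Group G] {D : Set G} {k : ℕ}
    (hD : ∀ h : Fin k → G, ∃ i j : Fin k, i < j ∧ (h i)⁻¹ * h j ∈ D)
    (g' : ℕ → G) (s : Finset ℕ) (hk : k ≤ s.card) :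
    ∃ x ∈ s, ∃ y ∈ s, x < y ∧ (g' x)⁻¹ * g' y ∈ D := by
  set e := s.orderEmbOfCardLe hk with he
  obtain ⟨i, j, hij, hmem⟩ := hD (fun a => g' (e a))
  exact ⟨e i, s.orderEmbOfCardLe_mem hk i, e j, s.orderEmbOfCardLe_mem hk j,
    e.strictMono hij, hmem⟩

/-- The intersection of two thick subsets of a group is thick. -/
theorem isThick_inter {G : Type*} [Group G] {D₁ D₂ : Set G}
    (h₁ : IsThick D₁) (h₂ : IsThick D₂) : IsThick (D₁ ∩ D₂) := by
  obtain ⟨hsym₁, n₁, hn₁, hth₁⟩ := h₁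
  obtain ⟨hsym₂, n₂, hn₂, hth₂⟩ := h₂
  refine ⟨fun d hd => ⟨hsym₁ d hd.1, hsym₂ d hd.2⟩, ?_⟩
  obtain ⟨N, hN⟩ := ramsey n₂ n₁
  refine ⟨N + 1, Nat.succ_pos N, fun g => ?_⟩
  classical
  set g' : ℕ → G := fun i => if h : i < N + 1 then g ⟨i, h⟩ else 1 with hg'
  obtain ⟨s, hsub, hcase⟩ := hN (fun i j => decide ((g' i)⁻¹ * g' j ∈ D₁))
  have hlt : ∀ x ∈ s, x < N + 1 := fun x hx =>
    Nat.lt_succ_of_lt (Finset.mem_range.mp (hsub hx))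
  rcases hcase with ⟨hc, hh⟩ | ⟨hc, hh⟩
  · -- s homogeneous true: all quotients in D₁; apply thickness of D₂
    obtain ⟨x, hx, y, hy, hxy, hD₂⟩ := extract hth₂ g' s hc
    have hD₁ : (g' x)⁻¹ * g' y ∈ D₁ := by
      have := hh x hx y hy hxy
      simpa using this
    refine ⟨⟨x, hlt x hx⟩, ⟨y, hlt y hy⟩, hxy, ?_⟩
    have hgx : g ⟨x, hlt x hx⟩ = g' x := by simp only [hg', dif_pos (hlt x hx)]
    have hgy : g ⟨y, hlt y hy⟩ = g' y := by simp only [hg', dif_pos (hlt y hy)]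
    rw [hgx, hgy]
    exact ⟨hD₁, hD₂⟩
  · -- s homogeneous false: contradiction with thickness of D₁
    obtain ⟨x, hx, y, hy, hxy, hD₁⟩ := extract hth₁ g' s hc
    have := hh x hx y hy hxy
    simp at this
    exact absurd hD₁ this
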